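/- Let L ≥ 1/e and c ≥ 0, and let (r_t)_{t≥1} be a real sequence with r_1 > 0 satisfying r_{t+1} ≥ r_t + c·exp(−L r_t) for all t ≥ 1. Then for every t ≥ 2 with c(t − 1) ≥ 1, it holds that r_t ≥ (1/(2L))·log(c(t − 1)). -/

import Mathlib

/-- For L ≥ 1/e, c ≥ 0 and (r_t)_{t≥1} with r_1 > 0 and
r_{t+1} ≥ r_t + c·exp(−L r_t): for every t ≥ 2 with c(t − 1) ≥ 1 one has
r_t ≥ (1/(2L))·log(c(t − 1)). -/
theorem stmt_16 (L c : ℝ) (hL : L ≥ 1 / Real.exp 1) (hc : 0 ≤ c) (r : ℕ → ℝ)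
    (hr1 : r 1 > 0)
    (hrec : ∀ t ≥ 1, r (t + 1) ≥ r t + c * Real.exp (-L * r t)) :
    ∀ t : ℕ, 2 ≤ t → c * ((t : ℝ) - 1) ≥ 1 →
      r t ≥ (1 / (2 * L)) * Real.log (c * ((t : ℝ) - 1)) := by
  have hLpos : 0 < L := lt_of_lt_of_le (by positivity) hL
  -- positivity of r t for t ≥ 1
  have hpos : ∀ t, 1 ≤ t → 0 < r t := by
    intro t ht
    induction t with
    | zero => omega
    | succ n ih =>
      rcases Nat.lt_or_ge n 1 with h | h
      · have hn0 : n = 0 := by omega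
        subst hn0; exact hr1
      · have h1 := hrec n h
        have h2 := ih h
        have h3 : 0 < Real.exp (-L * r n) := Real.exp_pos _
        nlinarith
  -- key inequality
  have key : ∀ t : ℕ, 1 ≤ t → c * ((t : ℝ) - 1) ≤ r t * Real.exp (L * r t) := by
    intro t ht
    induction t, ht using Nat.le_induction with
    | base =>
      simp only [Nat.cast_one, sub_self, mul_zero]
      positivity
    | succ n hn ih =>
      have h1 := hrec n hn
      have hrn := hpos n hn
      have hrn1 : r n ≤ r (n + 1) := by
        have h3 : 0 ≤ c * Real.exp (-L * r n) := by positivity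
        linarith
      have hE : Real.exp (L * r n) ≤ Real.exp (L * r (n + 1)) :=
        Real.exp_le_exp.mpr (by nlinarith)
      have hEn : 0 < Real.exp (L * r n) := Real.exp_pos _
      have hstep : r n * Real.exp (L * r n) + c ≤ r (n + 1) * Real.exp (L * r (n + 1)) := by
        have h4 : (r n + c * Real.exp (-L * r n)) * Real.exp (L * r n)
            = r n * Real.exp (L * r n) + c := by
          have hinv : Real.exp (-L * r n) * Real.exp (L * r n) = 1 := by
            rw [← Real.exp_add]; ring_nf; exact Real.exp_zero
          rw [add_mul, mul_assoc, hinv, mul_one]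
        have hpos1 : 0 < r n + c * Real.exp (-L * r n) := by positivity
        calc r n * Real.exp (L * r n) + c
            = (r n + c * Real.exp (-L * r n)) * Real.exp (L * r n) := h4.symm
          _ ≤ r (n + 1) * Real.exp (L * r n) := by nlinarith
          _ ≤ r (n + 1) * Real.exp (L * r (n + 1)) := by nlinarith
      push_cast
      linarith
  intro t ht hct
  have ht1 : (1 : ℕ) ≤ t := by omega
  have hrt := hpos t ht1
  have hkey := key t ht1
  set x := c * ((t : ℝ) - 1) with hx
  have hxpos : 0 < x := by linarith
  -- r t ≤ exp (L * r t)
  have hre : r t ≤ Real.exp (L * r t) := by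
    have hL' : 1 ≤ L * Real.exp 1 := by
      rw [ge_iff_le, div_le_iff₀ (Real.exp_pos 1)] at hL; linarith
    have h1 : r t / Real.exp 1 ≤ L * r t := by
      rw [div_le_iff₀ (Real.exp_pos 1)]
      nlinarith
    have h2 : r t ≤ Real.exp (r t / Real.exp 1) := by
      have h3 := Real.add_one_le_exp (r t / Real.exp 1 - 1)
      have h4 : Real.exp (r t / Real.exp 1 - 1) * Real.exp 1 = Real.exp (r t / Real.exp 1) := by
        rw [← Real.exp_add]; ring_nf
      have h5 : 0 < Real.exp 1 := Real.exp_pos 1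
      have h6 : (r t / Real.exp 1 - 1 + 1) * Real.exp 1 = r t := by
        field_simp
        ring
      nlinarith
    calc r t ≤ Real.exp (r t / Real.exp 1) := h2
      _ ≤ Real.exp (L * r t) := Real.exp_le_exp.mpr h1
  have hE : 0 < Real.exp (L * r t) := Real.exp_pos _
  have h2exp : x ≤ Real.exp (2 * L * r t) := by
    have : Real.exp (2 * L * r t) = Real.exp (L * r t) * Real.exp (L * r t) := by
      rw [← Real.exp_add]; ring_nf
    nlinarith
  have hlog : Real.log x ≤ 2 * L * r t :=
    (Real.log_le_iff_le_exp hxpos).mpr h2exp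
  rw [ge_iff_le, one_div, inv_mul_eq_div, div_le_iff₀ (by positivity)]
  linarith
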